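/- Let p be a prime and let G be the GGS-group over the p-adic tree with constant defining vector e = (1, 1, ..., 1). Then for the second-level vertex u = x_1x_1, the image ψ_u(st_G(L_2)) equals the normal closure ⟨b⁻¹a⟩^G of b⁻¹a in G, which is a proper subgroup of G. -/

import Mathlib

open Equiv

namespace TreeFract

variable {X : Type*}

/-- The automorphism group of the rooted `d`-adic tree with vertex set the free
monoid `List X`: permutations of the vertex set fixing the root and sending
children of a vertex to children of its image (this is exactly incidence
preservation for the rooted tree). -/
def AutT (X : Type*) : Subgroup (Equiv.Perm (List X)) where
  carrier := {g | g [] = [] ∧ ∀ (u : List X) (x : X), ∃ y : X, g (u ++ [x]) = g u ++ [y]}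
  one_mem' := ⟨rfl, fun _ x => ⟨x, rfl⟩⟩
  mul_mem' := by
    rintro f g ⟨hf1, hf2⟩ ⟨hg1, hg2⟩
    refine ⟨?_, fun u x => ?_⟩
    · show f (g []) = []
      rw [hg1, hf1]
    · obtain ⟨y, hy⟩ := hg2 u x
      obtain ⟨z, hz⟩ := hf2 (g u) y
      exact ⟨z, by show f (g (u ++ [x])) = f (g u) ++ [z]; rw [hy, hz]⟩
  inv_mem' := by
    rintro g ⟨hg1, hg2⟩
    have hinj := g.injective
    refine ⟨?_, fun u x => ?_⟩
    · apply hinj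
      show g (g⁻¹ []) = g []
      rw [Equiv.Perm.inv_def, Equiv.apply_symm_apply, hg1]
    · have hne : g⁻¹ (u ++ [x]) ≠ [] := by
        intro h
        have h2 : u ++ [x] = g [] := by
          conv_lhs => rw [← Equiv.apply_symm_apply g (u ++ [x]), ← Equiv.Perm.inv_def, h]
        rw [hg1] at h2
        simp at h2
      obtain ⟨y, hy⟩ : ∃ y, g⁻¹ (u ++ [x]) = (g⁻¹ (u ++ [x])).dropLast ++ [y] :=
        ⟨(g⁻¹ (u ++ [x])).getLast hne, (List.dropLast_append_getLast hne).symm⟩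
      obtain ⟨z, hz⟩ := hg2 ((g⁻¹ (u ++ [x])).dropLast) y
      have happ : g ((g⁻¹ (u ++ [x])).dropLast) ++ [z] = u ++ [x] := by
        rw [← hz, ← hy, Equiv.Perm.inv_def, Equiv.apply_symm_apply]
      have h2 : g ((g⁻¹ (u ++ [x])).dropLast) = u ∧ ([z] : List X) = [x] :=
        List.append_inj' happ rfl
      refine ⟨y, ?_⟩
      rw [hy]
      congr 1
      apply hinj
      rw [Equiv.Perm.inv_def, Equiv.apply_symm_apply, ← Equiv.Perm.inv_def, h2.1]

/-- The underlying function of the section of `g` at the vertex `u`. -/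
def sectFun (g : Equiv.Perm (List X)) (u : List X) : List X → List X :=
  fun v => (g (u ++ v)).drop (g u).length

open scoped Classical in
/-- The section `g_u` of a tree automorphism `g` at a vertex `u`, i.e. the unique
automorphism with `g (u ++ v) = g u ++ g_u v` for all `v`.  (By convention it is
the identity for permutations which are not tree automorphisms.) -/
noncomputable def sect (g : Equiv.Perm (List X)) (u : List X) : Equiv.Perm (List X) :=
  if h : Function.Bijective (sectFun g u) then Equiv.ofBijective _ h else 1

/-- The underlying function of the label of `g` at the vertex `u`. -/
def labelFun (g : Equiv.Perm (List X)) (u : List X) : X → X :=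
  fun x => (g (u ++ [x])).getLastD x

open scoped Classical in
/-- The label `g_(u)` of a tree automorphism `g` at a vertex `u`: the permutation
of `X` with `g (u ++ [x]) = g u ++ [g_(u) x]`.  (By convention it is the identity
for permutations which are not tree automorphisms.) -/
noncomputable def label (g : Equiv.Perm (List X)) (u : List X) : Equiv.Perm X :=
  if h : Function.Bijective (labelFun g u) then Equiv.ofBijective _ h else 1

/-- The stabilizer `st_G(u)` of the vertex `u` in `G`. -/
def stV (G : Subgroup (Equiv.Perm (List X))) (u : List X) : Subgroup (Equiv.Perm (List X)) where
  carrier := {g | g ∈ G ∧ g u = u}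
  one_mem' := ⟨one_mem G, rfl⟩
  mul_mem' := by
    rintro f g ⟨hf, hf2⟩ ⟨hg, hg2⟩
    exact ⟨mul_mem hf hg, by show f (g u) = u; rw [hg2, hf2]⟩
  inv_mem' := by
    rintro g ⟨hg, hg2⟩
    refine ⟨inv_mem hg, ?_⟩
    apply g.injective
    show g (g⁻¹ u) = g u
    rw [Equiv.Perm.inv_def, Equiv.apply_symm_apply, hg2]

/-- The stabilizer `st_G(L_n)` of the `n`-th level in `G`. -/
def stL (G : Subgroup (Equiv.Perm (List X))) (n : ℕ) : Subgroup (Equiv.Perm (List X)) where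
  carrier := {g | g ∈ G ∧ ∀ u : List X, u.length = n → g u = u}
  one_mem' := ⟨one_mem G, fun _ _ => rfl⟩
  mul_mem' := by
    rintro f g ⟨hf, hf2⟩ ⟨hg, hg2⟩
    exact ⟨mul_mem hf hg, fun u hu => by show f (g u) = u; rw [hg2 u hu, hf2 u hu]⟩
  inv_mem' := by
    rintro g ⟨hg, hg2⟩
    refine ⟨inv_mem hg, fun u hu => ?_⟩
    apply g.injective
    show g (g⁻¹ u) = g u
    rw [Equiv.Perm.inv_def, Equiv.apply_symm_apply, hg2 u hu]

/-- `G` is self-similar: sections of elements of `G` lie in `G`. -/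
def SelfSimilar (G : Subgroup (Equiv.Perm (List X))) : Prop :=
  ∀ g ∈ G, ∀ u : List X, sect g u ∈ G

/-- `G` acts transitively on the first level of the tree. -/
def FirstLevelTransitive (G : Subgroup (Equiv.Perm (List X))) : Prop :=
  ∀ x y : X, ∃ g ∈ G, g [x] = [y]

/-- `G` is level transitive: it acts transitively on every level of the tree. -/
def LevelTransitive (G : Subgroup (Equiv.Perm (List X))) : Prop :=
  ∀ (n : ℕ) (u v : List X), u.length = n → v.length = n → ∃ g ∈ G, g u = v

/-- `G` is fractal: `ψ_u(st_G(u)) = G` for every vertex `u`. -/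
def Fractal (G : Subgroup (Equiv.Perm (List X))) : Prop :=
  ∀ u : List X,
    (fun g => sect g u) '' (stV G u : Set (Equiv.Perm (List X))) = (G : Set (Equiv.Perm (List X)))

/-- `G` is strongly fractal: `ψ_x(st_G(L_1)) = G` for every first-level vertex `x`. -/
def StronglyFractal (G : Subgroup (Equiv.Perm (List X))) : Prop :=
  ∀ x : X,
    (fun g => sect g [x]) '' (stL G 1 : Set (Equiv.Perm (List X))) = (G : Set (Equiv.Perm (List X)))

/-- `G` is super strongly fractal: `ψ_u(st_G(L_n)) = G` for every `n` and every `u ∈ L_n`. -/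
def SuperStronglyFractal (G : Subgroup (Equiv.Perm (List X))) : Prop :=
  ∀ (n : ℕ) (u : List X), u.length = n →
    (fun g => sect g u) '' (stL G n : Set (Equiv.Perm (List X))) = (G : Set (Equiv.Perm (List X)))

/-- The normal closure `⟨S⟩^G` of a subset `S ⊆ G` in the subgroup `G`, realized as a
subgroup of the ambient group: the subgroup generated by all `G`-conjugates of `S`. -/
def normalClosureIn (G : Subgroup (Equiv.Perm (List X))) (S : Set (Equiv.Perm (List X))) :
    Subgroup (Equiv.Perm (List X)) :=
  Subgroup.closure {t | ∃ g ∈ G, ∃ s ∈ S, t = g * s * g⁻¹}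

end TreeFract
namespace TreeFract

/-! ### The Hanoi towers generators -/

section Hanoi

variable {d : ℕ}

/-- The underlying function of the automorphism `a_{ij}` of the Hanoi Towers group:
it swaps the first occurrence of `i` or `j` in a word. -/
def hanoiFun (i j : Fin d) : List (Fin d) → List (Fin d)
  | [] => []
  | x :: w => if x = i then j :: w else if x = j then i :: w else x :: hanoiFun i j w

lemma hanoiFun_invol (i j : Fin d) : ∀ w, hanoiFun i j (hanoiFun i j w) = w
  | [] => rfl
  | x :: w => by
    by_cases h1 : x = i
    · subst h1
      by_cases h2 : j = x
      · simp [hanoiFun, h2]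
      · simp [hanoiFun, h2]
    · by_cases h2 : x = j
      · subst h2
        simp [hanoiFun, h1]
      · simp [hanoiFun, h1, h2, hanoiFun_invol i j w]

/-- The automorphism `a_{ij}` of the `d`-adic tree: its label at the root is the
transposition `(x_i x_j)`, its sections at the first-level vertices `x_i` and `x_j`
are trivial and all its other first-level sections equal `a_{ij}` again. -/
def hanoiA (i j : Fin d) : Equiv.Perm (List (Fin d)) :=
  ⟨hanoiFun i j, hanoiFun i j, hanoiFun_invol i j, hanoiFun_invol i j⟩

end Hanoi

/-- The generator `b_i = a_{i,i+1}` (here `i` runs through `0, …, d-2`,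
corresponding to the paper's `b_1, …, b_{d-1}`). -/
def hanoiB (d : ℕ) (i : ℕ) (h : i + 1 < d) : Equiv.Perm (List (Fin d)) :=
  hanoiA ⟨i, Nat.lt_of_succ_lt h⟩ ⟨i + 1, h⟩

/-- The subgroup `G = ⟨b_1, …, b_{d-1}⟩` of the Hanoi Towers group. -/
def hanoiGroup (d : ℕ) : Subgroup (Equiv.Perm (List (Fin d))) :=
  Subgroup.closure {g | ∃ (i : ℕ) (h : i + 1 < d), g = hanoiB d i h}

/-! ### GGS groups (and the rooted automorphism `a`) -/

section GGS

variable {p : ℕ}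

/-- The function adding `m` to the first letter of a word over `ZMod p`. -/
def rotFun (m : ZMod p) : List (ZMod p) → List (ZMod p)
  | [] => []
  | x :: w => (x + m) :: w

/-- The rooted automorphism of the `p`-adic tree whose label at the root is the
`p`-cycle `x ↦ x + m`; for `m = 1` this is the generator `a` of a GGS-group
(identifying `x_i` with `i mod p`). -/
def rotPerm (m : ZMod p) : Equiv.Perm (List (ZMod p)) :=
  ⟨rotFun m, rotFun (-m),
    by intro w; cases w <;> simp [rotFun],
    by intro w; cases w <;> simp [rotFun]⟩

/-- The underlying function of the GGS generator `b` with defining vector `e`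
(the value `e 0` is irrelevant; `e i` for `i ≠ 0` are the coordinates
`e_1, …, e_{p-1}`): `b` fixes the first level, its section at `x_i` is
`a^{e_i}` for `i = 1, …, p-1` and its section at `x_p` (identified with `0`)
is `b` again. -/
def ggsFun (e : ZMod p → ZMod p) : List (ZMod p) → List (ZMod p)
  | [] => []
  | x :: w => if x = 0 then x :: ggsFun e w else x :: rotFun (e x) w

lemma ggsFun_inv (e : ZMod p → ZMod p) : ∀ w, ggsFun (fun i => -(e i)) (ggsFun e w) = w
  | [] => rfl
  | x :: w => by
    by_cases h : x = 0
    · simp only [ggsFun, if_pos h]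
      rw [ggsFun_inv e w]
    · simp only [ggsFun, if_neg h]
      cases w <;> simp [rotFun]

/-- The GGS generator `b` with defining vector `e`, as a tree automorphism. -/
def ggsB (e : ZMod p → ZMod p) : Equiv.Perm (List (ZMod p)) :=
  ⟨ggsFun e, ggsFun (fun i => -(e i)), ggsFun_inv e, by
    intro w
    have h := ggsFun_inv (fun i => -(e i)) w
    simpa using h⟩

end GGS

/-- The GGS-group `G = ⟨a, b⟩` over the `p`-adic tree with defining vector `e`. -/
def ggsGroup (p : ℕ) (e : ZMod p → ZMod p) : Subgroup (Equiv.Perm (List (ZMod p))) :=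
  Subgroup.closure {rotPerm 1, ggsB e}

/-! ### The first Grigorchuk group -/

/-- The three directed generators `b, c, d` (for `k % 3 = 0, 1, 2` respectively) of the
first Grigorchuk group, defined by the mutual recursion
`b = (a, c)`, `c = (a, d)`, `d = (1, b)` (identifying `x_1` with `0` and `x_2` with `1`). -/
def griFun : ℕ → List (ZMod 2) → List (ZMod 2)
  | _, [] => []
  | k, x :: w => if x = 0 then (if k % 3 = 2 then x :: w else x :: rotFun 1 w)
                 else x :: griFun (k + 1) w

lemma griFun_invol : ∀ (w : List (ZMod 2)) (k : ℕ), griFun k (griFun k w) = w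
  | [], _ => rfl
  | x :: w, k => by
    by_cases h : x = 0
    · by_cases h3 : k % 3 = 2
      · simp [griFun, h, h3]
      · simp only [griFun, if_pos h, if_neg h3]
        cases w with
        | nil => rfl
        | cons y v =>
            have hy : y + 1 + 1 = y := by
              rw [add_assoc]
              simp [show (1 : ZMod 2) + 1 = 0 from rfl]
            simp [rotFun, hy]
    · simp only [griFun, if_neg h]
      rw [griFun_invol w (k + 1)]

/-- The generator `b` of the first Grigorchuk group, with sections `(a, c)`. -/
def griB : Equiv.Perm (List (ZMod 2)) :=
  ⟨griFun 0, griFun 0, fun w => griFun_invol w 0, fun w => griFun_invol w 0⟩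

/-- The generator `c` of the first Grigorchuk group, with sections `(a, d)`. -/
def griC : Equiv.Perm (List (ZMod 2)) :=
  ⟨griFun 1, griFun 1, fun w => griFun_invol w 1, fun w => griFun_invol w 1⟩

/-- The generator `d` of the first Grigorchuk group, with sections `(1, b)`. -/
def griD : Equiv.Perm (List (ZMod 2)) :=
  ⟨griFun 2, griFun 2, fun w => griFun_invol w 2, fun w => griFun_invol w 2⟩

/-- The first Grigorchuk group `𝒢 = ⟨a, b, c, d⟩` acting on the binary tree. -/
def grigorchukGroup : Subgroup (Equiv.Perm (List (ZMod 2))) :=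
  Subgroup.closure {rotPerm 1, griB, griC, griD}

end TreeFract

theorem Equiv.Perm.inv_apply_self {α : Type*} (f : Equiv.Perm α) (x : α) : f⁻¹ (f x) = x :=
  f.symm_apply_apply x

theorem Equiv.Perm.apply_inv_self {α : Type*} (f : Equiv.Perm α) (x : α) : f (f⁻¹ x) = x :=
  f.apply_symm_apply x

namespace TreeFract

section AuxSect

variable {X : Type*} {g f : Equiv.Perm (List X)}

lemma autT_root (hg : g ∈ AutT X) : g [] = [] := hg.1

lemma autT_length (hg : g ∈ AutT X) : ∀ u : List X, (g u).length = u.length := by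
  intro u
  induction u using List.reverseRecOn with
  | nil => rw [autT_root hg]
  | append_singleton u x ih =>
      obtain ⟨y, hy⟩ := hg.2 u x
      rw [hy]
      simp [ih]

lemma autT_exists_append (hg : g ∈ AutT X) (u : List X) :
    ∀ v : List X, ∃ t : List X, g (u ++ v) = g u ++ t := by
  intro v
  induction v using List.reverseRecOn with
  | nil => exact ⟨[], by simp⟩
  | append_singleton v x ih =>
      obtain ⟨t, ht⟩ := ih
      obtain ⟨y, hy⟩ := hg.2 (u ++ v) x
      refine ⟨t ++ [y], ?_⟩
      rw [← List.append_assoc, hy, ht, List.append_assoc]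

lemma sectFun_spec (hg : g ∈ AutT X) (u v : List X) :
    g (u ++ v) = g u ++ sectFun g u v := by
  obtain ⟨t, ht⟩ := autT_exists_append hg u v
  rw [sectFun, ht, List.drop_left]

lemma sectFun_left_inverse (hg : g ∈ AutT X) (u : List X) (v : List X) :
    sectFun g⁻¹ (g u) (sectFun g u v) = v := by
  have h1 : g u ++ sectFun g u v = g (u ++ v) := (sectFun_spec hg u v).symm
  show (g⁻¹ (g u ++ sectFun g u v)).drop (g⁻¹ (g u)).length = v
  rw [h1, Equiv.Perm.inv_apply_self, Equiv.Perm.inv_apply_self, List.drop_left]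

lemma sectFun_bijective (hg : g ∈ AutT X) (u : List X) :
    Function.Bijective (sectFun g u) := by
  constructor
  · intro v w h
    have := sectFun_left_inverse hg u v
    rw [h, sectFun_left_inverse hg u w] at this
    exact this.symm
  · intro w
    refine ⟨sectFun g⁻¹ (g u) w, ?_⟩
    have := sectFun_left_inverse (inv_mem hg) (g u) w
    rwa [inv_inv, Equiv.Perm.inv_apply_self] at this

lemma sect_apply (hg : g ∈ AutT X) (u v : List X) :
    sect g u v = (g (u ++ v)).drop (g u).length := by
  unfold sect
  rw [dif_pos (sectFun_bijective hg u)]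
  rfl

lemma sect_spec (hg : g ∈ AutT X) (u v : List X) :
    g (u ++ v) = g u ++ sect g u v := by
  rw [sect_apply hg]
  exact sectFun_spec hg u v

lemma sect_one (u : List X) : sect (1 : Equiv.Perm (List X)) u = 1 := by
  refine Equiv.ext fun v => ?_
  rw [sect_apply (one_mem (AutT X))]
  simp

lemma sect_mul (hf : f ∈ AutT X) (hg : g ∈ AutT X) (u : List X) :
    sect (f * g) u = sect f (g u) * sect g u := by
  refine Equiv.ext fun v => ?_
  rw [Equiv.Perm.mul_apply, sect_apply (mul_mem hf hg), Equiv.Perm.mul_apply,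
    Equiv.Perm.mul_apply, sect_spec hg u v, sect_spec hf (g u) (sect g u v), List.drop_left]

lemma sect_mem_autT (hg : g ∈ AutT X) (u : List X) : sect g u ∈ AutT X := by
  constructor
  · rw [sect_apply hg]
    simp
  · intro v x
    obtain ⟨y, hy⟩ := hg.2 (u ++ v) x
    refine ⟨y, ?_⟩
    rw [sect_apply hg, sect_apply hg, ← List.append_assoc, hy, sect_spec hg u v,
      List.append_assoc, List.drop_left, List.drop_left]

lemma sect_sect (hg : g ∈ AutT X) (u v : List X) :
    sect g (u ++ v) = sect (sect g u) v := by
  refine Equiv.ext fun w => ?_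
  have hD : (sect g u) (v ++ w) = sect g u v ++ sect g (u ++ v) w := by
    rw [sect_apply hg, ← List.append_assoc, sect_spec hg (u ++ v) w, sect_spec hg u v,
      List.append_assoc, List.drop_left, sect_apply hg]
  rw [sect_apply (sect_mem_autT hg u), hD, List.drop_left]

lemma sect_inv_self (hg : g ∈ AutT X) (u : List X) :
    sect g⁻¹ (g u) = (sect g u)⁻¹ := by
  have h := sect_mul (inv_mem hg) hg u
  rw [inv_mul_cancel, sect_one] at h
  exact eq_inv_of_mul_eq_one_left h.symm

lemma sect_inv (hg : g ∈ AutT X) {u : List X} (hu : g u = u) :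
    sect g⁻¹ u = (sect g u)⁻¹ := by
  have := sect_inv_self hg u
  rwa [hu] at this

end AuxSect
section AuxGen

variable {p : ℕ}

lemma rotPerm_apply (m : ZMod p) (w : List (ZMod p)) : rotPerm m w = rotFun m w := rfl

lemma ggsB_apply (e : ZMod p → ZMod p) (w : List (ZMod p)) : ggsB e w = ggsFun e w := rfl

lemma rotFun_length (m : ZMod p) (w : List (ZMod p)) : (rotFun m w).length = w.length := by
  cases w <;> rfl

lemma ggsFun_length (e : ZMod p → ZMod p) : ∀ w : List (ZMod p),
    (ggsFun e w).length = w.length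
  | [] => rfl
  | x :: w => by
      by_cases h : x = 0
      · simp only [ggsFun, if_pos h, List.length_cons, ggsFun_length e w]
      · simp only [ggsFun, if_neg h, List.length_cons, rotFun_length]

lemma rotPerm_mul (m m' : ZMod p) : rotPerm m * rotPerm m' = rotPerm (m + m') := by
  refine Equiv.ext fun w => ?_
  show rotFun m (rotFun m' w) = rotFun (m + m') w
  cases w with
  | nil => rfl
  | cons x t => show (x + m' + m) :: t = (x + (m + m')) :: t; rw [add_assoc, add_comm m' m]

lemma rotPerm_zero : rotPerm (0 : ZMod p) = 1 := by
  refine Equiv.ext fun w => ?_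
  show rotFun 0 w = w
  cases w with
  | nil => rfl
  | cons x t => show (x + 0) :: t = x :: t; rw [add_zero]

lemma rotPerm_inv (m : ZMod p) : (rotPerm m)⁻¹ = rotPerm (-m) := by
  refine Equiv.ext fun w => ?_
  rfl

lemma ggsB_inv (e : ZMod p → ZMod p) : (ggsB e)⁻¹ = ggsB (fun i => -(e i)) := by
  refine Equiv.ext fun w => ?_
  rfl

lemma rotPerm_one_pow (n : ℕ) : (rotPerm (1 : ZMod p)) ^ n = rotPerm (n : ZMod p) := by
  induction n with
  | zero => rw [pow_zero, Nat.cast_zero, rotPerm_zero]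
  | succ n ih => rw [pow_succ, ih, rotPerm_mul, Nat.cast_succ]

lemma rotPerm_one_pow_p : (rotPerm (1 : ZMod p)) ^ p = 1 := by
  rw [rotPerm_one_pow, ZMod.natCast_self, rotPerm_zero]

lemma rotPerm_mem_autT (m : ZMod p) : rotPerm m ∈ AutT (ZMod p) := by
  refine ⟨rfl, fun u x => ?_⟩
  cases u with
  | nil => exact ⟨x + m, rfl⟩
  | cons z t => exact ⟨x, rfl⟩

lemma ggsFun_append_singleton (e : ZMod p → ZMod p) :
    ∀ (u : List (ZMod p)) (x : ZMod p), ∃ y, ggsFun e (u ++ [x]) = ggsFun e u ++ [y]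
  | [], x => ⟨x, by
      by_cases h : x = 0 <;> simp [ggsFun, rotFun, h]⟩
  | z :: u, x => by
      by_cases h : z = 0
      · obtain ⟨y, hy⟩ := ggsFun_append_singleton e u x
        exact ⟨y, by simp [ggsFun, h, hy]⟩
      · cases u with
        | nil => exact ⟨x + e z, by simp [ggsFun, h, rotFun]⟩
        | cons w t => exact ⟨x, by simp [ggsFun, h, rotFun]⟩

lemma ggsB_mem_autT (e : ZMod p → ZMod p) : ggsB e ∈ AutT (ZMod p) :=
  ⟨rfl, fun u x => ggsFun_append_singleton e u x⟩

lemma ggsGroup_le_autT (e : ZMod p → ZMod p) : ggsGroup p e ≤ AutT (ZMod p) := by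
  rw [ggsGroup, Subgroup.closure_le]
  rintro g (rfl | rfl)
  · exact rotPerm_mem_autT 1
  · exact ggsB_mem_autT e

end AuxGen
section AuxNice

variable {p : ℕ}

/-- Rotation label at the root. -/
def lab0 (g : Equiv.Perm (List (ZMod p))) : ZMod p := (g [0]).headI

/-- Rotation label of the section at the first-level vertex `x`. -/
def lab1 (g : Equiv.Perm (List (ZMod p))) (x : ZMod p) : ZMod p := (g [x, 0]).getLastD 0

/-- `g` is length preserving and has rotation labels at levels `0` and `1`. -/
def NiceC (g : Equiv.Perm (List (ZMod p))) : Prop :=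
  (∀ w, (g w).length = w.length) ∧
  (∀ x w, ∃ w', g (x :: w) = (x + lab0 g) :: w') ∧
  (∀ x y w, ∃ w', g (x :: y :: w) = (x + lab0 g) :: (y + lab1 g x) :: w')

namespace NiceC

variable {g f : Equiv.Perm (List (ZMod p))}

lemma single (h : NiceC g) (x : ZMod p) : g [x] = [x + lab0 g] := by
  obtain ⟨w', hw⟩ := h.2.1 x []
  have hl := h.1 [x]
  rw [hw] at hl ⊢
  have h0 : w'.length = 0 := by simpa using hl
  rw [List.length_eq_zero_iff.mp h0]

lemma pair (h : NiceC g) (x y : ZMod p) : g [x, y] = [x + lab0 g, y + lab1 g x] := by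
  obtain ⟨w', hw⟩ := h.2.2 x y []
  have hl := h.1 [x, y]
  rw [hw] at hl ⊢
  have h0 : w'.length = 0 := by simpa using hl
  rw [List.length_eq_zero_iff.mp h0]

end NiceC

lemma lab0_one : lab0 (1 : Equiv.Perm (List (ZMod p))) = 0 := rfl

lemma lab1_one (x : ZMod p) : lab1 (1 : Equiv.Perm (List (ZMod p))) x = 0 := rfl

lemma niceC_one : NiceC (1 : Equiv.Perm (List (ZMod p))) := by
  refine ⟨fun w => rfl, fun x w => ⟨w, ?_⟩, fun x y w => ⟨w, ?_⟩⟩ <;>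
    simp [lab0_one, lab1_one]

lemma lab0_mul {f g : Equiv.Perm (List (ZMod p))} (hf : NiceC f) (hg : NiceC g) :
    lab0 (f * g) = lab0 f + lab0 g := by
  show ((f * g) [0]).headI = _
  rw [Equiv.Perm.mul_apply, hg.single, hf.single]
  show 0 + lab0 g + lab0 f = lab0 f + lab0 g
  ring

lemma lab1_mul {f g : Equiv.Perm (List (ZMod p))} (hf : NiceC f) (hg : NiceC g) (x : ZMod p) :
    lab1 (f * g) x = lab1 f (x + lab0 g) + lab1 g x := by
  show ((f * g) [x, 0]).getLastD 0 = _
  rw [Equiv.Perm.mul_apply, hg.pair, zero_add, hf.pair]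
  show lab1 g x + lab1 f (x + lab0 g) = _
  rw [add_comm]

lemma niceC_mul {f g : Equiv.Perm (List (ZMod p))} (hf : NiceC f) (hg : NiceC g) :
    NiceC (f * g) := by
  have h0 := lab0_mul hf hg
  refine ⟨fun w => by rw [Equiv.Perm.mul_apply, hf.1, hg.1], fun x w => ?_, fun x y w => ?_⟩
  · obtain ⟨w1, hw1⟩ := hg.2.1 x w
    obtain ⟨w2, hw2⟩ := hf.2.1 (x + lab0 g) w1
    refine ⟨w2, ?_⟩
    rw [Equiv.Perm.mul_apply, hw1, hw2, h0]
    simp only [List.cons.injEq, and_true]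
    ring
  · obtain ⟨w1, hw1⟩ := hg.2.2 x y w
    obtain ⟨w2, hw2⟩ := hf.2.2 (x + lab0 g) (y + lab1 g x) w1
    refine ⟨w2, ?_⟩
    rw [Equiv.Perm.mul_apply, hw1, hw2, h0, lab1_mul hf hg x]
    simp only [List.cons.injEq, and_true]
    constructor <;> ring

/-- The subgroup of permutations of the tree which together with their inverses are
length preserving with rotation labels at levels `0` and `1`. -/
def Nice : Subgroup (Equiv.Perm (List (ZMod p))) where
  carrier := {g | NiceC g ∧ NiceC g⁻¹}
  one_mem' := ⟨niceC_one, by rw [inv_one]; exact niceC_one⟩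
  mul_mem' := fun hf hg => ⟨niceC_mul hf.1 hg.1, by
    rw [mul_inv_rev]; exact niceC_mul hg.2 hf.2⟩
  inv_mem' := fun hg => ⟨hg.2, by rw [inv_inv]; exact hg.1⟩

lemma Nice.niceC {g : Equiv.Perm (List (ZMod p))} (hg : g ∈ Nice) : NiceC g := hg.1

lemma lab0_inv {g : Equiv.Perm (List (ZMod p))} (hg : g ∈ Nice) : lab0 g⁻¹ = -lab0 g := by
  have h := lab0_mul hg.2 hg.1
  rw [inv_mul_cancel, lab0_one] at h
  linear_combination -h

lemma lab1_inv {g : Equiv.Perm (List (ZMod p))} (hg : g ∈ Nice) (x : ZMod p) :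
    lab1 g⁻¹ x = -(lab1 g (x - lab0 g)) := by
  have h := lab1_mul hg.2 hg.1 (x - lab0 g)
  rw [inv_mul_cancel, lab1_one, sub_add_cancel] at h
  linear_combination -h

end AuxNice

section AuxSgm

variable {p : ℕ} [NeZero p]

/-- The sum of the level-one labels. -/
def bsum (g : Equiv.Perm (List (ZMod p))) : ZMod p := ∑ x : ZMod p, lab1 g x

/-- The homomorphism `σ = exp_a + exp_b` on the GGS group. -/
def sgm (g : Equiv.Perm (List (ZMod p))) : ZMod p := lab0 g - bsum g

lemma bsum_one : bsum (1 : Equiv.Perm (List (ZMod p))) = 0 := by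
  simp [bsum, lab1_one]

lemma bsum_mul {f g : Equiv.Perm (List (ZMod p))} (hf : f ∈ Nice) (hg : g ∈ Nice) :
    bsum (f * g) = bsum f + bsum g := by
  unfold bsum
  rw [Finset.sum_congr rfl fun x _ => lab1_mul hf.1 hg.1 x, Finset.sum_add_distrib]
  congr 1
  exact Fintype.sum_equiv (Equiv.addRight (lab0 g)) _ _ (fun x => rfl)

lemma bsum_inv {g : Equiv.Perm (List (ZMod p))} (hg : g ∈ Nice) : bsum g⁻¹ = -bsum g := by
  have h := bsum_mul (inv_mem hg) hg
  rw [inv_mul_cancel, bsum_one] at h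
  linear_combination -h

lemma sgm_one : sgm (1 : Equiv.Perm (List (ZMod p))) = 0 := by
  simp [sgm, bsum_one, lab0_one]

lemma sgm_mul {f g : Equiv.Perm (List (ZMod p))} (hf : f ∈ Nice) (hg : g ∈ Nice) :
    sgm (f * g) = sgm f + sgm g := by
  unfold sgm
  rw [bsum_mul hf hg, lab0_mul hf.1 hg.1]
  ring

lemma sgm_inv {g : Equiv.Perm (List (ZMod p))} (hg : g ∈ Nice) : sgm g⁻¹ = -sgm g := by
  unfold sgm
  rw [bsum_inv hg, lab0_inv hg]
  ring

end AuxSgm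
section AuxGenNice

variable {p : ℕ}

lemma lab0_rot (m : ZMod p) : lab0 (rotPerm m) = m := by
  show ((0 : ZMod p) + m) = m
  rw [zero_add]

lemma lab1_rot (m : ZMod p) (x : ZMod p) : lab1 (rotPerm m) x = 0 := rfl

lemma niceC_rot (m : ZMod p) : NiceC (rotPerm m) := by
  refine ⟨fun w => rotFun_length m w, fun x w => ⟨w, ?_⟩, fun x y w => ⟨w, ?_⟩⟩ <;>
    rw [lab0_rot] <;> [skip; rw [lab1_rot, add_zero]] <;> rfl

lemma rot_mem_nice (m : ZMod p) : rotPerm m ∈ Nice := by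
  refine ⟨niceC_rot m, ?_⟩
  rw [rotPerm_inv]
  exact niceC_rot (-m)

lemma lab0_ggs (e : ZMod p → ZMod p) : lab0 (ggsB e) = 0 := by
  show ((ggsFun e [0]).headI : ZMod p) = 0
  simp [ggsFun]

lemma lab1_ggs (e : ZMod p → ZMod p) (x : ZMod p) :
    lab1 (ggsB e) x = if x = 0 then 0 else e x := by
  show ((ggsFun e [x, 0]).getLastD 0 : ZMod p) = _
  by_cases h : x = 0
  · simp [ggsFun, h]
  · simp [ggsFun, h, rotFun]

lemma niceC_ggs (e : ZMod p → ZMod p) : NiceC (ggsB e) := by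
  refine ⟨fun w => ggsFun_length e w, fun x w => ?_, fun x y w => ?_⟩
  · rw [lab0_ggs, add_zero]
    by_cases h : x = 0
    · exact ⟨ggsFun e w, by show ggsFun e (x :: w) = _; rw [ggsFun, if_pos h]⟩
    · exact ⟨rotFun (e x) w, by show ggsFun e (x :: w) = _; rw [ggsFun, if_neg h]⟩
  · rw [lab0_ggs, add_zero, lab1_ggs]
    by_cases h : x = 0
    · rw [if_pos h]
      by_cases hy : y = 0
      · refine ⟨ggsFun e w, ?_⟩
        show ggsFun e (x :: y :: w) = _
        rw [ggsFun, if_pos h, ggsFun, if_pos hy, add_zero]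
      · refine ⟨rotFun (e y) w, ?_⟩
        show ggsFun e (x :: y :: w) = _
        rw [ggsFun, if_pos h, ggsFun, if_neg hy, add_zero]
    · refine ⟨w, ?_⟩
      show ggsFun e (x :: y :: w) = _
      rw [ggsFun, if_neg h, if_neg h]
      rfl

lemma ggs_mem_nice (e : ZMod p → ZMod p) : ggsB e ∈ Nice := by
  refine ⟨niceC_ggs e, ?_⟩
  rw [ggsB_inv]
  exact niceC_ggs _

lemma ggsGroup_le_nice (e : ZMod p → ZMod p) : ggsGroup p e ≤ Nice := by
  rw [ggsGroup, Subgroup.closure_le]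
  rintro g (rfl | rfl)
  · exact rot_mem_nice 1
  · exact ggs_mem_nice e

/-! Sections of the generators. -/

lemma sect_rot (m : ZMod p) (x : ZMod p) : sect (rotPerm m) [x] = 1 := by
  refine Equiv.ext fun v => ?_
  rw [sect_apply (rotPerm_mem_autT m)]
  show ((rotFun m (x :: v)).drop (rotFun m [x]).length) = v
  rfl

lemma sect_ggs_zero (e : ZMod p → ZMod p) : sect (ggsB e) [0] = ggsB e := by
  refine Equiv.ext fun v => ?_
  rw [sect_apply (ggsB_mem_autT e)]
  show ((ggsFun e ((0 : ZMod p) :: v)).drop (ggsFun e [0]).length) = ggsFun e v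
  have h1 : ggsFun e ((0 : ZMod p) :: v) = 0 :: ggsFun e v := by rw [ggsFun, if_pos rfl]
  have h2 : ggsFun e [(0 : ZMod p)] = [0] := by rw [ggsFun, if_pos rfl]; rfl
  rw [h1, h2]
  rfl

lemma sect_ggs_ne (e : ZMod p → ZMod p) {x : ZMod p} (hx : x ≠ 0) :
    sect (ggsB e) [x] = rotPerm (e x) := by
  refine Equiv.ext fun v => ?_
  rw [sect_apply (ggsB_mem_autT e)]
  show ((ggsFun e (x :: v)).drop (ggsFun e [x]).length) = rotFun (e x) v
  have h1 : ggsFun e (x :: v) = x :: rotFun (e x) v := by rw [ggsFun, if_neg hx]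
  have h2 : ggsFun e [x] = [x] := by rw [ggsFun, if_neg hx]; rfl
  rw [h1, h2]
  rfl

end AuxGenNice

section AuxSgmVal

variable {p : ℕ} [NeZero p]

lemma bsum_rot (m : ZMod p) : bsum (rotPerm m) = 0 := by
  simp [bsum, lab1_rot]

lemma sgm_rot : sgm (rotPerm (1 : ZMod p)) = 1 := by
  rw [sgm, bsum_rot, lab0_rot, sub_zero]

lemma bsum_ggs_one : bsum (ggsB (fun _ => (1 : ZMod p))) = -1 := by
  unfold bsum
  rw [Finset.sum_congr rfl fun x _ => lab1_ggs _ x]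
  have h : ∀ x : ZMod p, (if x = 0 then (0 : ZMod p) else 1) =
      1 - (if x = 0 then 1 else 0) := by
    intro x
    split <;> simp
  rw [Finset.sum_congr rfl fun x _ => h x, Finset.sum_sub_distrib,
    Finset.sum_const, Finset.sum_ite_eq' Finset.univ (0 : ZMod p) (fun _ => (1 : ZMod p))]
  simp [Finset.card_univ, ZMod.card, ZMod.natCast_self]

lemma sgm_ggs_one : sgm (ggsB (fun _ => (1 : ZMod p))) = 1 := by
  rw [sgm, bsum_ggs_one, lab0_ggs]
  ring

end AuxSgmVal
section AuxMain

variable {p : ℕ} [NeZero p]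

lemma a_mem_G : rotPerm (1 : ZMod p) ∈ ggsGroup p (fun _ => 1) :=
  Subgroup.subset_closure (Set.mem_insert _ _)

lemma b_mem_G : ggsB (fun _ => (1 : ZMod p)) ∈ ggsGroup p (fun _ => 1) :=
  Subgroup.subset_closure (Set.mem_insert_of_mem _ rfl)

lemma s_mem_G : rotPerm (1 : ZMod p) * (ggsB (fun _ => 1))⁻¹ ∈ ggsGroup p (fun _ => 1) :=
  mul_mem a_mem_G (inv_mem b_mem_G)

lemma s_mem_ncl :
    rotPerm (1 : ZMod p) * (ggsB (fun _ => 1))⁻¹ ∈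
      normalClosureIn (ggsGroup p (fun _ => 1)) {rotPerm 1 * (ggsB (fun _ => 1))⁻¹} :=
  Subgroup.subset_closure ⟨1, one_mem _, _, Set.mem_singleton _, by group⟩

lemma ncl_le_G :
    normalClosureIn (ggsGroup p (fun _ => 1)) {rotPerm 1 * (ggsB (fun _ => (1 : ZMod p)))⁻¹} ≤
      ggsGroup p (fun _ => 1) := by
  rw [normalClosureIn, Subgroup.closure_le]
  rintro t ⟨g, hg, s, hs, rfl⟩
  rw [Set.mem_singleton_iff] at hs
  subst hs
  exact mul_mem (mul_mem hg s_mem_G) (inv_mem hg)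

lemma conj_mem_ncl {g n : Equiv.Perm (List (ZMod p))} (hg : g ∈ ggsGroup p (fun _ => 1))
    (hn : n ∈ normalClosureIn (ggsGroup p (fun _ => 1)) {rotPerm 1 * (ggsB (fun _ => 1))⁻¹}) :
    g * n * g⁻¹ ∈
      normalClosureIn (ggsGroup p (fun _ => 1)) {rotPerm 1 * (ggsB (fun _ => 1))⁻¹} := by
  induction hn using Subgroup.closure_induction with
  | mem x hx =>
      obtain ⟨g', hg', s, hs, rfl⟩ := hx
      exact Subgroup.subset_closure ⟨g * g', mul_mem hg hg', s, hs, by group⟩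
  | one => simpa using one_mem _
  | mul x y hx hy ihx ihy =>
      have h : g * (x * y) * g⁻¹ = (g * x * g⁻¹) * (g * y * g⁻¹) := by group
      rw [h]; exact mul_mem ihx ihy
  | inv x hx ihx =>
      have h : g * x⁻¹ * g⁻¹ = (g * x * g⁻¹)⁻¹ := by group
      rw [h]; exact inv_mem ihx

lemma sgm_ncl {n : Equiv.Perm (List (ZMod p))}
    (hn : n ∈ normalClosureIn (ggsGroup p (fun _ => 1)) {rotPerm 1 * (ggsB (fun _ => 1))⁻¹}) :
    sgm n = 0 := by
  have hsab : rotPerm (1 : ZMod p) * (ggsB (fun _ => 1))⁻¹ ∈ Nice :=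
    mul_mem (rot_mem_nice 1) (inv_mem (ggs_mem_nice _))
  induction hn using Subgroup.closure_induction with
  | mem x hx =>
      obtain ⟨g', hg', s, hs, rfl⟩ := hx
      rw [Set.mem_singleton_iff] at hs
      subst hs
      have hgN : g' ∈ Nice := ggsGroup_le_nice _ hg'
      rw [sgm_mul (mul_mem hgN hsab) (inv_mem hgN), sgm_mul hgN hsab, sgm_inv hgN,
        sgm_mul (rot_mem_nice 1) (inv_mem (ggs_mem_nice _)), sgm_inv (ggs_mem_nice _),
        sgm_rot, sgm_ggs_one]
      ring
  | one => exact sgm_one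
  | mul x y hx hy ihx ihy =>
      have hxN : x ∈ Nice := ggsGroup_le_nice _ (ncl_le_G hx)
      have hyN : y ∈ Nice := ggsGroup_le_nice _ (ncl_le_G hy)
      rw [sgm_mul hxN hyN, ihx, ihy, add_zero]
  | inv x hx ihx =>
      rw [sgm_inv (ggsGroup_le_nice _ (ncl_le_G hx)), ihx, neg_zero]

/-- The subgroup used to show that the kernel of `σ` in `G` is the normal closure. -/
def Msub (p : ℕ) [NeZero p] : Subgroup (Equiv.Perm (List (ZMod p))) where
  carrier := {g | g ∈ ggsGroup p (fun _ => 1) ∧ ∃ k : ℤ, ((k : ℤ) : ZMod p) = sgm g ∧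
    g * (rotPerm (1 : ZMod p)) ^ (-k) ∈
      normalClosureIn (ggsGroup p (fun _ => 1)) {rotPerm 1 * (ggsB (fun _ => 1))⁻¹}}
  one_mem' := ⟨one_mem _, 0, by simp [sgm_one], by simpa using one_mem _⟩
  mul_mem' := by
    rintro f g ⟨hfG, k, hk, hfN⟩ ⟨hgG, l, hl, hgN⟩
    refine ⟨mul_mem hfG hgG, k + l, ?_, ?_⟩
    · push_cast
      rw [hk, hl, sgm_mul (ggsGroup_le_nice _ hfG) (ggsGroup_le_nice _ hgG)]
    · have h : f * g * (rotPerm (1 : ZMod p)) ^ (-(k + l)) =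
        (f * (g * (rotPerm (1 : ZMod p)) ^ (-l)) * f⁻¹) *
          (f * (rotPerm (1 : ZMod p)) ^ (-k)) := by group
      rw [h]
      exact mul_mem (conj_mem_ncl hfG hgN) hfN
  inv_mem' := by
    rintro g ⟨hgG, k, hk, hgN⟩
    refine ⟨inv_mem hgG, -k, ?_, ?_⟩
    · push_cast
      rw [hk, sgm_inv (ggsGroup_le_nice _ hgG)]
    · have h : g⁻¹ * (rotPerm (1 : ZMod p)) ^ (-(-k)) =
        g⁻¹ * (g * (rotPerm (1 : ZMod p)) ^ (-k))⁻¹ * (g⁻¹)⁻¹ := by group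
      rw [h]
      exact conj_mem_ncl (inv_mem hgG) (inv_mem hgN)

lemma G_le_Msub : ggsGroup p (fun _ => (1 : ZMod p)) ≤ Msub p := by
  rw [ggsGroup, Subgroup.closure_le]
  rintro g (rfl | rfl)
  · refine ⟨a_mem_G, 1, by rw [sgm_rot]; norm_num, ?_⟩
    have h : rotPerm (1 : ZMod p) * (rotPerm (1 : ZMod p)) ^ (-(1 : ℤ)) = 1 := by group
    rw [h]
    exact one_mem _
  · refine ⟨b_mem_G, 1, by rw [sgm_ggs_one]; norm_num, ?_⟩
    have h : ggsB (fun _ => (1 : ZMod p)) * (rotPerm (1 : ZMod p)) ^ (-(1 : ℤ)) =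
        (rotPerm (1 : ZMod p) * (ggsB (fun _ => 1))⁻¹)⁻¹ := by group
    rw [h]
    exact inv_mem s_mem_ncl

lemma ker_le_ncl {g : Equiv.Perm (List (ZMod p))} (hg : g ∈ ggsGroup p (fun _ => 1))
    (h0 : sgm g = 0) :
    g ∈ normalClosureIn (ggsGroup p (fun _ => 1)) {rotPerm 1 * (ggsB (fun _ => 1))⁻¹} := by
  obtain ⟨-, k, hk, hN⟩ := G_le_Msub hg
  rw [h0] at hk
  obtain ⟨m, rfl⟩ := (ZMod.intCast_zmod_eq_zero_iff_dvd k p).mp hk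
  have hone : (rotPerm (1 : ZMod p)) ^ (-((p : ℤ) * m)) = 1 := by
    have h1 : (-(((p : ℤ)) * m)) = (p : ℤ) * (-m) := by ring
    rw [h1, zpow_mul, zpow_natCast, rotPerm_one_pow_p, one_zpow]
  rw [hone, mul_one] at hN
  exact hN

/-- The subgroup encoding self-similarity and the section/σ identity. -/
def Good (p : ℕ) [NeZero p] : Subgroup (Equiv.Perm (List (ZMod p))) where
  carrier := {g | g ∈ ggsGroup p (fun _ => 1) ∧ ∀ x : ZMod p,
    sect g [x] ∈ ggsGroup p (fun _ => 1) ∧ sgm (sect g [x]) = -(bsum g)}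
  one_mem' := ⟨one_mem _, fun x => ⟨by rw [sect_one]; exact one_mem _,
    by rw [sect_one, sgm_one, bsum_one, neg_zero]⟩⟩
  mul_mem' := by
    rintro f g ⟨hfG, hf⟩ ⟨hgG, hg⟩
    refine ⟨mul_mem hfG hgG, fun x => ?_⟩
    have hfA := ggsGroup_le_autT _ hfG
    have hgA := ggsGroup_le_autT _ hgG
    have hfN : f ∈ Nice := ggsGroup_le_nice _ hfG
    have hgN : g ∈ Nice := ggsGroup_le_nice _ hgG
    have hsect : sect (f * g) [x] = sect f [x + lab0 g] * sect g [x] := by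
      rw [sect_mul hfA hgA, hgN.1.single]
    constructor
    · rw [hsect]
      exact mul_mem (hf _).1 (hg x).1
    · rw [hsect, sgm_mul (ggsGroup_le_nice _ (hf _).1) (ggsGroup_le_nice _ (hg x).1),
        (hf _).2, (hg x).2, bsum_mul hfN hgN]
      ring
  inv_mem' := by
    rintro g ⟨hgG, hg⟩
    have hgA := ggsGroup_le_autT _ hgG
    have hgN : g ∈ Nice := ggsGroup_le_nice _ hgG
    refine ⟨inv_mem hgG, fun x => ?_⟩
    have hx' : g [x + lab0 g⁻¹] = [x] := by
      rw [hgN.1.single]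
      have h1 : x + lab0 g⁻¹ + lab0 g = x := by rw [lab0_inv hgN]; ring
      rw [h1]
    have hsect : sect g⁻¹ [x] = (sect g [x + lab0 g⁻¹])⁻¹ := by
      have h2 := sect_inv_self hgA [x + lab0 g⁻¹]
      rwa [hx'] at h2
    constructor
    · rw [hsect]
      exact inv_mem (hg _).1
    · rw [hsect, sgm_inv (ggsGroup_le_nice _ (hg _).1), (hg _).2, bsum_inv hgN]

lemma G_le_Good : ggsGroup p (fun _ => (1 : ZMod p)) ≤ Good p := by
  rw [ggsGroup, Subgroup.closure_le]
  rintro g (rfl | rfl)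
  · refine ⟨a_mem_G, fun x => ?_⟩
    rw [sect_rot]
    exact ⟨one_mem _, by rw [sgm_one, bsum_rot, neg_zero]⟩
  · refine ⟨b_mem_G, fun x => ?_⟩
    by_cases hx : x = 0
    · subst hx
      rw [sect_ggs_zero]
      exact ⟨b_mem_G, by rw [sgm_ggs_one, bsum_ggs_one, neg_neg]⟩
    · rw [sect_ggs_ne _ hx]
      exact ⟨a_mem_G, by rw [sgm_rot, bsum_ggs_one, neg_neg]⟩

lemma sect_stL_two_mem_ncl {h : Equiv.Perm (List (ZMod p))}
    (hh : h ∈ stL (ggsGroup p (fun _ => 1)) 2) :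
    sect h [1, 1] ∈
      normalClosureIn (ggsGroup p (fun _ => 1)) {rotPerm 1 * (ggsB (fun _ => 1))⁻¹} := by
  obtain ⟨hG, hfix⟩ := hh
  have hA := ggsGroup_le_autT _ hG
  have hN : h ∈ Nice := ggsGroup_le_nice _ hG
  have h00 : h [0, 0] = [0, 0] := hfix _ rfl
  have hl0 : lab0 h = 0 := by
    have h1 := (hN.1.pair 0 0).symm.trans h00
    simp only [List.cons.injEq, and_true] at h1
    have := h1.1
    linear_combination this
  have hl1 : ∀ x : ZMod p, lab1 h x = 0 := by
    intro x
    have h2 : h [x, 0] = [x, 0] := hfix _ rfl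
    have h1 := (hN.1.pair x 0).symm.trans h2
    simp only [List.cons.injEq, and_true] at h1
    have := h1.2
    linear_combination this
  have hb : bsum h = 0 := by
    unfold bsum
    rw [Finset.sum_congr rfl fun x _ => hl1 x]
    simp
  obtain ⟨h1G, h1s⟩ := (G_le_Good hG).2 1
  have hs1 : sgm (sect h [1]) = 0 := by rw [h1s, hb, neg_zero]
  have hfix1 : h [1] = [1] := by rw [hN.1.single, hl0, add_zero]
  have h10 : h [1, 0] = [1, 0] := hfix _ rfl
  have hl0' : lab0 (sect h [1]) = 0 := by
    show ((sect h [1]) [0]).headI = 0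
    have h3 : (sect h [1]) [0] = (h ([1] ++ [0])).drop (h [1]).length := sect_apply hA [1] [0]
    rw [hfix1, show ([1] ++ [0] : List (ZMod p)) = [1, 0] from rfl, h10] at h3
    rw [h3]
    rfl
  have hb1 : bsum (sect h [1]) = 0 := by
    have h4 : lab0 (sect h [1]) - bsum (sect h [1]) = 0 := hs1
    rw [hl0'] at h4
    linear_combination -h4
  obtain ⟨tG, ts⟩ := (G_le_Good h1G).2 1
  have hsect : sect h [1, 1] = sect (sect h [1]) [1] := by
    rw [show ([1, 1] : List (ZMod p)) = [1] ++ [1] from rfl, sect_sect hA]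
  rw [hsect]
  exact ker_le_ncl tG (by rw [ts, hb1, neg_zero])

end AuxMain
section AuxImage

variable {p : ℕ} [NeZero p]

/-- The image `ψ_{[1,1]}(st_G(L_2))` as a subgroup. -/
def Isub (p : ℕ) : Subgroup (Equiv.Perm (List (ZMod p))) where
  carrier := {t | ∃ h, h ∈ stL (ggsGroup p (fun _ => 1)) 2 ∧ sect h [1, 1] = t}
  one_mem' := ⟨1, one_mem _, sect_one _⟩
  mul_mem' := by
    rintro t₁ t₂ ⟨h₁, hh₁, rfl⟩ ⟨h₂, hh₂, rfl⟩
    refine ⟨h₁ * h₂, mul_mem hh₁ hh₂, ?_⟩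
    rw [sect_mul (ggsGroup_le_autT _ hh₁.1) (ggsGroup_le_autT _ hh₂.1), hh₂.2 [1, 1] rfl]
  inv_mem' := by
    rintro t ⟨h, hh, rfl⟩
    exact ⟨h⁻¹, inv_mem hh, by rw [sect_inv (ggsGroup_le_autT _ hh.1) (hh.2 [1, 1] rfl)]⟩

lemma conj_Isub {F t : Equiv.Perm (List (ZMod p))} (hF : F ∈ ggsGroup p (fun _ => 1))
    (hF11 : F [1, 1] = [1, 1]) (ht : t ∈ Isub p) :
    sect F [1, 1] * t * (sect F [1, 1])⁻¹ ∈ Isub p := by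
  obtain ⟨h, ⟨hG, hfix⟩, rfl⟩ := ht
  have hFA := ggsGroup_le_autT _ hF
  have hhA := ggsGroup_le_autT _ hG
  have hFi : F⁻¹ [1, 1] = [1, 1] := by
    conv_lhs => rw [← hF11]
    rw [Equiv.Perm.inv_apply_self]
  refine ⟨F * h * F⁻¹, ⟨mul_mem (mul_mem hF hG) (inv_mem hF), fun u hu => ?_⟩, ?_⟩
  · have hlen : (F⁻¹ u).length = 2 := by rw [autT_length (inv_mem hFA)]; exact hu
    show (F * h * F⁻¹) u = u
    rw [Equiv.Perm.mul_apply, Equiv.Perm.mul_apply, hfix _ hlen, Equiv.Perm.apply_inv_self]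
  · rw [sect_mul (mul_mem hFA hhA) (inv_mem hFA), hFi, sect_mul hFA hhA, hfix [1, 1] rfl,
      sect_inv hFA hF11]

/-- The conjugating element `F_a = a b a⁻¹` with section `a` at `[1,1]`. -/
def Fa (p : ℕ) : Equiv.Perm (List (ZMod p)) :=
  rotPerm 1 * ggsB (fun _ => 1) * (rotPerm 1)⁻¹

/-- The conjugating element `F_b = b F_a b⁻¹` with section `b` at `[1,1]`. -/
def Fb (p : ℕ) : Equiv.Perm (List (ZMod p)) := ggsB (fun _ => 1) * Fa p * (ggsB (fun _ => 1))⁻¹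

/-- The element `X = F_a F_b⁻¹ ∈ st_G(L_2)` with section `a b⁻¹` at `[1,1]`. -/
def Xel (p : ℕ) : Equiv.Perm (List (ZMod p)) := Fa p * (Fb p)⁻¹

lemma Fa_mem_G : Fa p ∈ ggsGroup p (fun _ => 1) :=
  mul_mem (mul_mem a_mem_G b_mem_G) (inv_mem a_mem_G)

lemma Fb_mem_G : Fb p ∈ ggsGroup p (fun _ => 1) :=
  mul_mem (mul_mem b_mem_G Fa_mem_G) (inv_mem b_mem_G)

lemma Xel_mem_G : Xel p ∈ ggsGroup p (fun _ => 1) := mul_mem Fa_mem_G (inv_mem Fb_mem_G)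

lemma Fa_mem_nice : Fa p ∈ Nice :=
  mul_mem (mul_mem (rot_mem_nice 1) (ggs_mem_nice _)) (inv_mem (rot_mem_nice 1))

lemma Fb_mem_nice : Fb p ∈ Nice :=
  mul_mem (mul_mem (ggs_mem_nice _) Fa_mem_nice) (inv_mem (ggs_mem_nice _))

lemma Xel_mem_nice : Xel p ∈ Nice := mul_mem Fa_mem_nice (inv_mem Fb_mem_nice)

lemma lab0_Fa : lab0 (Fa p) = 0 := by
  rw [Fa, lab0_mul (mul_mem (rot_mem_nice 1) (ggs_mem_nice _)).1 (inv_mem (rot_mem_nice 1)).1,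
    lab0_mul (rot_mem_nice 1).1 (ggs_mem_nice _).1, lab0_inv (rot_mem_nice 1),
    lab0_rot, lab0_ggs]
  ring

lemma lab1_Fa (x : ZMod p) : lab1 (Fa p) x = if x = 1 then 0 else 1 := by
  have e0 : lab0 (rotPerm (1 : ZMod p))⁻¹ = -1 := by
    rw [lab0_inv (rot_mem_nice 1), lab0_rot]
  have e1 : ∀ y : ZMod p, lab1 (rotPerm (1 : ZMod p))⁻¹ y = 0 := fun y => by
    rw [rotPerm_inv]; exact lab1_rot _ _
  have e2 : ∀ y : ZMod p, lab1 (rotPerm (1 : ZMod p) * ggsB (fun _ => 1)) y =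
      if y = 0 then 0 else 1 := fun y => by
    rw [lab1_mul (rot_mem_nice 1).1 (ggs_mem_nice _).1, lab1_rot, lab1_ggs, zero_add]
  rw [Fa, lab1_mul (mul_mem (rot_mem_nice 1) (ggs_mem_nice _)).1 (inv_mem (rot_mem_nice 1)).1,
    e0, e1, e2, add_zero]
  have h1 : x + -1 = 0 ↔ x = 1 := by constructor <;> intro h <;> linear_combination h
  by_cases hx : x = 1
  · rw [if_pos hx, if_pos (h1.mpr hx)]
  · rw [if_neg hx, if_neg (fun h => hx (h1.mp h))]

lemma Fa_fix1 : Fa p [1] = [1] := by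
  rw [Fa_mem_nice.1.single, lab0_Fa, add_zero]

lemma Fa_fix11 : Fa p [1, 1] = [1, 1] := by
  rw [Fa_mem_nice.1.pair, lab0_Fa, lab1_Fa, if_pos rfl, add_zero]

lemma lab0_Fb : lab0 (Fb p) = 0 := by
  rw [Fb, lab0_mul (mul_mem (ggs_mem_nice _) Fa_mem_nice).1 (inv_mem (ggs_mem_nice _)).1,
    lab0_mul (ggs_mem_nice _).1 Fa_mem_nice.1, lab0_inv (ggs_mem_nice _), lab0_ggs, lab0_Fa]
  ring

lemma lab1_Fb (x : ZMod p) : lab1 (Fb p) x = if x = 1 then 0 else 1 := by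
  have f0 : lab0 (ggsB (fun _ => (1 : ZMod p)))⁻¹ = 0 := by
    rw [lab0_inv (ggs_mem_nice _), lab0_ggs, neg_zero]
  have f1 : ∀ y : ZMod p, lab1 (ggsB (fun _ => (1 : ZMod p)))⁻¹ y =
      -(if y = 0 then 0 else 1) := fun y => by
    rw [lab1_inv (ggs_mem_nice _), lab0_ggs, sub_zero, lab1_ggs]
  have f2 : ∀ y : ZMod p, lab1 (ggsB (fun _ => (1 : ZMod p)) * Fa p) y =
      (if y = 0 then 0 else 1) + (if y = 1 then 0 else 1) := fun y => by
    rw [lab1_mul (ggs_mem_nice _).1 Fa_mem_nice.1, lab0_Fa, add_zero, lab1_ggs, lab1_Fa]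
  rw [Fb, lab1_mul (mul_mem (ggs_mem_nice _) Fa_mem_nice).1 (inv_mem (ggs_mem_nice _)).1,
    f0, f1, f2, add_zero]
  ring

lemma Fb_fix1 : Fb p [1] = [1] := by
  rw [Fb_mem_nice.1.single, lab0_Fb, add_zero]

lemma Fb_fix11 : Fb p [1, 1] = [1, 1] := by
  rw [Fb_mem_nice.1.pair, lab0_Fb, lab1_Fb, if_pos rfl, add_zero]

lemma lab0_Xel : lab0 (Xel p) = 0 := by
  rw [Xel, lab0_mul Fa_mem_nice.1 (inv_mem Fb_mem_nice).1, lab0_inv Fb_mem_nice,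
    lab0_Fa, lab0_Fb]
  ring

lemma lab1_Xel (x : ZMod p) : lab1 (Xel p) x = 0 := by
  have g1 : ∀ y : ZMod p, lab1 (Fb p)⁻¹ y = -(if y = 1 then 0 else 1) := fun y => by
    rw [lab1_inv Fb_mem_nice, lab0_Fb, sub_zero, lab1_Fb]
  rw [Xel, lab1_mul Fa_mem_nice.1 (inv_mem Fb_mem_nice).1, lab0_inv Fb_mem_nice, lab0_Fb,
    neg_zero, add_zero, g1, lab1_Fa]
  ring

lemma Xel_mem_stL : Xel p ∈ stL (ggsGroup p (fun _ => 1)) 2 := by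
  refine ⟨Xel_mem_G, fun u hu => ?_⟩
  obtain ⟨x, y, rfl⟩ := List.length_eq_two.mp hu
  rw [Xel_mem_nice.1.pair, lab0_Xel, lab1_Xel, add_zero, add_zero]

end AuxImage

section AuxImage2

variable {p : ℕ} [NeZero p] [Fact (1 < p)]

lemma b_fix0 : ggsB (fun _ => (1 : ZMod p)) [0] = [0] := by
  rw [(ggs_mem_nice _).1.single, lab0_ggs, add_zero]

lemma b_fix1 : ggsB (fun _ => (1 : ZMod p)) [1] = [1] := by
  rw [(ggs_mem_nice _).1.single, lab0_ggs, add_zero]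

lemma sect_b_1 : sect (ggsB (fun _ => (1 : ZMod p))) [1] = rotPerm 1 :=
  sect_ggs_ne _ one_ne_zero

lemma ainv_apply_1 : (rotPerm (1 : ZMod p))⁻¹ [1] = [0] := by
  rw [rotPerm_inv]
  show [(1 : ZMod p) + -1] = [0]
  norm_num

lemma sect_Fa_1 : sect (Fa p) [1] = ggsB (fun _ => (1 : ZMod p)) := by
  have hA := rotPerm_mem_autT (1 : ZMod p)
  have hB := ggsB_mem_autT (fun _ => (1 : ZMod p))
  rw [Fa, sect_mul (mul_mem hA hB) (inv_mem hA), ainv_apply_1, rotPerm_inv, sect_rot,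
    sect_mul hA hB, b_fix0, sect_rot, sect_ggs_zero, one_mul, mul_one]

lemma sect_Fa_11 : sect (Fa p) [1, 1] = rotPerm 1 := by
  have hFaA := ggsGroup_le_autT _ (Fa_mem_G (p := p))
  rw [show ([1, 1] : List (ZMod p)) = [1] ++ [1] from rfl, sect_sect hFaA, sect_Fa_1, sect_b_1]

lemma binv_fix1 : (ggsB (fun _ => (1 : ZMod p)))⁻¹ [1] = [1] := by
  conv_lhs => rw [← b_fix1]
  rw [Equiv.Perm.inv_apply_self]

lemma sect_Fb_1 : sect (Fb p) [1] = Fa p := by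
  have hB := ggsB_mem_autT (fun _ => (1 : ZMod p))
  have hFaA := ggsGroup_le_autT _ (Fa_mem_G (p := p))
  rw [Fb, sect_mul (mul_mem hB hFaA) (inv_mem hB), binv_fix1, sect_inv hB b_fix1,
    sect_mul hB hFaA, Fa_fix1, sect_b_1, sect_Fa_1, Fa]

lemma sect_Fb_11 : sect (Fb p) [1, 1] = ggsB (fun _ => (1 : ZMod p)) := by
  have hFbA := ggsGroup_le_autT _ (Fb_mem_G (p := p))
  rw [show ([1, 1] : List (ZMod p)) = [1] ++ [1] from rfl, sect_sect hFbA, sect_Fb_1, sect_Fa_1]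

lemma sect_Xel_11 : sect (Xel p) [1, 1] = rotPerm 1 * (ggsB (fun _ => (1 : ZMod p)))⁻¹ := by
  have hFaA := ggsGroup_le_autT _ (Fa_mem_G (p := p))
  have hFbA := ggsGroup_le_autT _ (Fb_mem_G (p := p))
  have hFbi : (Fb p)⁻¹ [1, 1] = [1, 1] := by
    conv_lhs => rw [← Fb_fix11]
    rw [Equiv.Perm.inv_apply_self]
  rw [Xel, sect_mul hFaA (inv_mem hFbA), hFbi, sect_inv hFbA Fb_fix11, sect_Fa_11, sect_Fb_11]

lemma a_mem_normalizer : rotPerm (1 : ZMod p) ∈ Subgroup.normalizer (Isub p : Set (Equiv.Perm (List (ZMod p)))) := by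
  rw [Subgroup.mem_normalizer_iff]
  intro t
  constructor
  · intro ht
    have h := conj_Isub Fa_mem_G Fa_fix11 ht
    rwa [sect_Fa_11] at h
  · intro ht
    have hFai : (Fa p)⁻¹ [1, 1] = [1, 1] := by
      conv_lhs => rw [← Fa_fix11]
      rw [Equiv.Perm.inv_apply_self]
    have h := conj_Isub (inv_mem Fa_mem_G) hFai ht
    rw [sect_inv (ggsGroup_le_autT _ (Fa_mem_G (p := p))) Fa_fix11, sect_Fa_11] at h
    have e : (rotPerm (1 : ZMod p))⁻¹ * (rotPerm 1 * t * (rotPerm 1)⁻¹) *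
        ((rotPerm (1 : ZMod p))⁻¹)⁻¹ = t := by group
    rwa [e] at h

lemma b_mem_normalizer : ggsB (fun _ => (1 : ZMod p)) ∈ Subgroup.normalizer (Isub p : Set (Equiv.Perm (List (ZMod p)))) := by
  rw [Subgroup.mem_normalizer_iff]
  intro t
  constructor
  · intro ht
    have h := conj_Isub Fb_mem_G Fb_fix11 ht
    rwa [sect_Fb_11] at h
  · intro ht
    have hFbi : (Fb p)⁻¹ [1, 1] = [1, 1] := by
      conv_lhs => rw [← Fb_fix11]
      rw [Equiv.Perm.inv_apply_self]
    have h := conj_Isub (inv_mem Fb_mem_G) hFbi ht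
    rw [sect_inv (ggsGroup_le_autT _ (Fb_mem_G (p := p))) Fb_fix11, sect_Fb_11] at h
    have e : (ggsB (fun _ => (1 : ZMod p)))⁻¹ * (ggsB (fun _ => 1) * t * (ggsB (fun _ => 1))⁻¹) *
        ((ggsB (fun _ => (1 : ZMod p)))⁻¹)⁻¹ = t := by group
    rwa [e] at h

lemma G_le_normalizer : ggsGroup p (fun _ => (1 : ZMod p)) ≤ Subgroup.normalizer (Isub p : Set (Equiv.Perm (List (ZMod p)))) := by
  rw [ggsGroup, Subgroup.closure_le]
  rintro g (rfl | rfl)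
  · exact a_mem_normalizer
  · exact b_mem_normalizer

lemma ncl_le_Isub :
    normalClosureIn (ggsGroup p (fun _ => 1)) {rotPerm 1 * (ggsB (fun _ => (1 : ZMod p)))⁻¹} ≤
      Isub p := by
  rw [normalClosureIn, Subgroup.closure_le]
  rintro t ⟨g, hg, s, hs, rfl⟩
  rw [Set.mem_singleton_iff] at hs
  subst hs
  have hs_in : rotPerm 1 * (ggsB (fun _ => (1 : ZMod p)))⁻¹ ∈ Isub p :=
    ⟨Xel p, Xel_mem_stL, sect_Xel_11⟩
  exact (Subgroup.mem_normalizer_iff.mp (G_le_normalizer hg) _).mp hs_in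

end AuxImage2
/-- For the GGS-group `G` with constant defining vector `(1, …, 1)`
and the second-level vertex `u = x_1 x_1`, the image `ψ_u(st_G(L_2))` equals the normal
closure `⟨b⁻¹a⟩^G`, which is a proper subgroup of `G`. -/
theorem ggsGroup_constant_sect_stL_two (p : ℕ) [Fact p.Prime] :
    (fun g => sect g [(1 : ZMod p), 1]) ''
        (stL (ggsGroup p (fun _ => 1)) 2 : Set (Equiv.Perm (List (ZMod p)))) =
      (normalClosureIn (ggsGroup p (fun _ => 1)) {rotPerm 1 * (ggsB (fun _ => 1))⁻¹} :
        Set (Equiv.Perm (List (ZMod p)))) ∧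
    normalClosureIn (ggsGroup p (fun _ => 1)) {rotPerm 1 * (ggsB (fun _ => 1))⁻¹}
      < ggsGroup p (fun _ => 1) := by
  haveI : NeZero p := ⟨(Fact.out : p.Prime).ne_zero⟩
  haveI : Fact (1 < p) := ⟨(Fact.out : p.Prime).one_lt⟩
  constructor
  · ext t
    simp only [Set.mem_image, SetLike.mem_coe]
    constructor
    · rintro ⟨h, hh, rfl⟩
      exact sect_stL_two_mem_ncl hh
    · intro ht
      obtain ⟨h, hh, hs⟩ := ncl_le_Isub ht
      exact ⟨h, hh, hs⟩
  · refine lt_of_le_of_ne ncl_le_G fun hEq => ?_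
    have haN : rotPerm (1 : ZMod p) ∈
        normalClosureIn (ggsGroup p (fun _ => 1)) {rotPerm 1 * (ggsB (fun _ => 1))⁻¹} := by
      rw [hEq]
      exact a_mem_G
    have h0 := sgm_ncl haN
    rw [sgm_rot] at h0
    exact one_ne_zero h0

end TreeFract
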